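/- Assume the set A of action names is finite. Then there exists a finite axiom system over CCS extended with the left merge operator ⌊ and the communication merge operator | that is sound and ground-complete modulo bisimilarity ∼_B (Bergstra–Klop theorem). -/

import Mathlib

/-- Actions: names, co-names and the silent action τ. -/
inductive Act (A : Type) : Type
  | name : A → Act A
  | coname : A → Act A
  | tau : Act A
  deriving DecidableEq

/-- Complementation of actions (`co` of τ is τ; it is only ever used on non-τ actions). -/
def Act.co {A : Type} : Act A → Act A
  | .name a => .coname a
  | .coname a => .name a
  | .tau => .tau

/-- Terms of CCS extended with the left merge `⌊` and the communication merge `|`. -/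
inductive Tm (A : Type) : Type
  | nil : Tm A
  | var : ℕ → Tm A
  | pre : Act A → Tm A → Tm A
  | plus : Tm A → Tm A → Tm A
  | par : Tm A → Tm A → Tm A
  | lmerge : Tm A → Tm A → Tm A
  | cmerge : Tm A → Tm A → Tm A

/-- The SOS transition relation of CCS with left merge and communication merge. -/
inductive Step {A : Type} : Tm A → Act A → Tm A → Prop
  | pre (μ : Act A) (t : Tm A) : Step (.pre μ t) μ t
  | plusL {t u t' : Tm A} {μ : Act A} : Step t μ t' → Step (.plus t u) μ t'
  | plusR {t u u' : Tm A} {μ : Act A} : Step u μ u' → Step (.plus t u) μ u'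
  | parL {t u t' : Tm A} {μ : Act A} : Step t μ t' → Step (.par t u) μ (.par t' u)
  | parR {t u u' : Tm A} {μ : Act A} : Step u μ u' → Step (.par t u) μ (.par t u')
  | comm {t u t' u' : Tm A} {α : Act A} : α ≠ Act.tau → Step t α t' → Step u α.co u' →
      Step (.par t u) .tau (.par t' u')
  | lmerge {t u t' : Tm A} {μ : Act A} : Step t μ t' → Step (.lmerge t u) μ (.par t' u)
  | cmerge {t u t' u' : Tm A} {α : Act A} : α ≠ Act.tau → Step t α t' → Step u α.co u' →
      Step (.cmerge t u) .tau (.par t' u')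

/-- A term is closed (a process) if no variable occurs in it. -/
def Closed {A : Type} : Tm A → Prop
  | .nil => True
  | .var _ => False
  | .pre _ t => Closed t
  | .plus t u => Closed t ∧ Closed u
  | .par t u => Closed t ∧ Closed u
  | .lmerge t u => Closed t ∧ Closed u
  | .cmerge t u => Closed t ∧ Closed u

/-- Applying a substitution to a term. -/
def subst {A : Type} (σ : ℕ → Tm A) : Tm A → Tm A
  | .nil => .nil
  | .var x => σ x
  | .pre μ t => .pre μ (subst σ t)
  | .plus t u => .plus (subst σ t) (subst σ u)
  | .par t u => .par (subst σ t) (subst σ u)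
  | .lmerge t u => .lmerge (subst σ t) (subst σ u)
  | .cmerge t u => .cmerge (subst σ t) (subst σ u)

/-- A substitution is closed if all its values are closed. -/
def ClosedSubst {A : Type} (σ : ℕ → Tm A) : Prop := ∀ x, Closed (σ x)

/-- `R` is a bisimulation (symmetric, with the transfer property). -/
def IsBisim {A : Type} (R : Tm A → Tm A → Prop) : Prop :=
  (∀ p q, R p q → R q p) ∧
  (∀ p q μ p', R p q → Step p μ p' → ∃ q', Step q μ q' ∧ R p' q')

/-- Bisimilarity: the largest bisimulation. -/
def Bisim {A : Type} (p q : Tm A) : Prop := ∃ R, IsBisim R ∧ R p q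

/-- Equations are pairs of terms. -/
abbrev Eqn (A : Type) := Tm A × Tm A

/-- Derivability in equational logic from the axiom system `E`. -/
inductive Deriv {A : Type} (E : Set (Eqn A)) : Tm A → Tm A → Prop
  | ax {t u : Tm A} (σ : ℕ → Tm A) (h : (t, u) ∈ E) : Deriv E (subst σ t) (subst σ u)
  | refl (t : Tm A) : Deriv E t t
  | symm {t u : Tm A} (h : Deriv E t u) : Deriv E u t
  | trans {t u v : Tm A} (h₁ : Deriv E t u) (h₂ : Deriv E u v) : Deriv E t v
  | pre (μ : Act A) {t u : Tm A} (h : Deriv E t u) : Deriv E (.pre μ t) (.pre μ u)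
  | plus {t u t' u' : Tm A} (h₁ : Deriv E t u) (h₂ : Deriv E t' u') :
      Deriv E (.plus t t') (.plus u u')
  | par {t u t' u' : Tm A} (h₁ : Deriv E t u) (h₂ : Deriv E t' u') :
      Deriv E (.par t t') (.par u u')
  | lmerge {t u t' u' : Tm A} (h₁ : Deriv E t u) (h₂ : Deriv E t' u') :
      Deriv E (.lmerge t t') (.lmerge u u')
  | cmerge {t u t' u' : Tm A} (h₁ : Deriv E t u) (h₂ : Deriv E t' u') :
      Deriv E (.cmerge t t') (.cmerge u u')

/-- An equation is sound modulo `sim` if all its closed instances are related by `sim`. -/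
def EqnSound {A : Type} (sim : Tm A → Tm A → Prop) (t u : Tm A) : Prop :=
  ∀ σ : ℕ → Tm A, ClosedSubst σ → sim (subst σ t) (subst σ u)

/-- An axiom system is sound modulo `sim` if each of its equations is. -/
def SystemSound {A : Type} (sim : Tm A → Tm A → Prop) (E : Set (Eqn A)) : Prop :=
  ∀ e ∈ E, EqnSound sim e.1 e.2

/-- An axiom system is ground-complete modulo `sim` if it derives every valid
closed equation. -/
def GroundComplete {A : Type} (sim : Tm A → Tm A → Prop) (E : Set (Eqn A)) : Prop :=
  ∀ p q : Tm A, Closed p → Closed q → sim p q → Deriv E p q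


section Helpers
variable {A : Type}

open Tm Act

/-! ### Basic lemmas about bisimilarity -/

theorem bisim_step {p q p' : Tm A} {μ : Act A} (h : Bisim p q) (hs : Step p μ p') :
    ∃ q', Step q μ q' ∧ Bisim p' q' := by
  obtain ⟨R, hR, hpq⟩ := h
  obtain ⟨q', hq', hr⟩ := hR.2 p q μ p' hpq hs
  exact ⟨q', hq', R, hR, hr⟩

theorem bisim_refl (p : Tm A) : Bisim p p :=
  ⟨Eq, ⟨fun _ _ h => h.symm, fun p _ μ p' h hs => ⟨p', h ▸ hs, rfl⟩⟩, rfl⟩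

theorem bisim_symm {p q : Tm A} (h : Bisim p q) : Bisim q p := by
  obtain ⟨R, hR, hpq⟩ := h
  exact ⟨R, hR, hR.1 _ _ hpq⟩

theorem bisim_trans {p q r : Tm A} (h1 : Bisim p q) (h2 : Bisim q r) : Bisim p r := by
  refine ⟨fun a c => ∃ b, Bisim a b ∧ Bisim b c, ⟨?_, ?_⟩, q, h1, h2⟩
  · rintro a c ⟨b, hab, hbc⟩
    exact ⟨b, bisim_symm hbc, bisim_symm hab⟩
  · rintro a c μ a' ⟨b, hab, hbc⟩ hs
    obtain ⟨b', hbs, hab'⟩ := bisim_step hab hs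
    obtain ⟨c', hcs, hbc'⟩ := bisim_step hbc hbs
    exact ⟨c', hcs, b', hab', hbc'⟩

theorem co_co (μ : Act A) : μ.co.co = μ := by cases μ <;> rfl

theorem co_ne_tau {μ : Act A} (h : μ ≠ Act.tau) : μ.co ≠ Act.tau := by
  cases μ <;> simp_all [Act.co]

/-- Commutativity of parallel composition modulo bisimilarity. -/
theorem bisim_par_comm (a b : Tm A) : Bisim (par a b) (par b a) := by
  refine ⟨fun p q => ∃ a b, p = par a b ∧ q = par b a, ⟨?_, ?_⟩, a, b, rfl, rfl⟩
  · rintro p q ⟨a, b, rfl, rfl⟩; exact ⟨b, a, rfl, rfl⟩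
  · rintro p q μ p' ⟨a, b, rfl, rfl⟩ hs
    cases hs with
    | parL h => exact ⟨_, Step.parR h, _, _, rfl, rfl⟩
    | parR h => exact ⟨_, Step.parL h, _, _, rfl, rfl⟩
    | comm hτ h1 h2 =>
        refine ⟨_, Step.comm (co_ne_tau hτ) h2 ?_, _, _, rfl, rfl⟩
        rwa [co_co]

/-- Congruence of parallel composition modulo bisimilarity. -/
theorem bisim_par_congr {a b c d : Tm A} (h1 : Bisim a b) (h2 : Bisim c d) :
    Bisim (par a c) (par b d) := by
  refine ⟨fun p q => ∃ a b c d, Bisim a b ∧ Bisim c d ∧ p = par a c ∧ q = par b d,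
    ⟨?_, ?_⟩, a, b, c, d, h1, h2, rfl, rfl⟩
  · rintro p q ⟨a, b, c, d, h1, h2, rfl, rfl⟩
    exact ⟨b, a, d, c, bisim_symm h1, bisim_symm h2, rfl, rfl⟩
  · rintro p q μ p' ⟨a, b, c, d, h1, h2, rfl, rfl⟩ hs
    cases hs with
    | parL h =>
        obtain ⟨b', hb, h1'⟩ := bisim_step h1 h
        exact ⟨_, Step.parL hb, _, _, _, _, h1', h2, rfl, rfl⟩
    | parR h =>
        obtain ⟨d', hd, h2'⟩ := bisim_step h2 h
        exact ⟨_, Step.parR hd, _, _, _, _, h1, h2', rfl, rfl⟩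
    | comm hτ ha hc =>
        obtain ⟨b', hb, h1'⟩ := bisim_step h1 ha
        obtain ⟨d', hd, h2'⟩ := bisim_step h2 hc
        exact ⟨_, Step.comm hτ hb hd, _, _, _, _, h1', h2', rfl, rfl⟩


/-! ### The axiom system -/

instance actFinite [Finite A] : Finite (Act A) := by
  have hinj : Function.Injective (fun a : Act A =>
      (match a with
        | .name x => Sum.inl (Sum.inl x)
        | .coname x => Sum.inl (Sum.inr x)
        | .tau => Sum.inr () : (A ⊕ A) ⊕ Unit)) := by
    intro a b h
    cases a <;> cases b <;> simp_all
  exact Finite.of_injective _ hinj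

open Tm in
/-- The base (non-parametrised) axioms. -/
def baseE (A : Type) : Set (Eqn A) :=
  { (plus (var 0) (var 1), plus (var 1) (var 0)),
    (plus (plus (var 0) (var 1)) (var 2), plus (var 0) (plus (var 1) (var 2))),
    (plus (var 0) (var 0), var 0),
    (plus (var 0) nil, var 0),
    (par (var 0) (var 1),
      plus (plus (lmerge (var 0) (var 1)) (lmerge (var 1) (var 0)))
        (cmerge (var 0) (var 1))),
    (lmerge nil (var 0), nil),
    (lmerge (plus (var 0) (var 1)) (var 2),
      plus (lmerge (var 0) (var 2)) (lmerge (var 1) (var 2))),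
    (cmerge nil (var 0), nil),
    (cmerge (var 0) nil, nil),
    (cmerge (plus (var 0) (var 1)) (var 2),
      plus (cmerge (var 0) (var 2)) (cmerge (var 1) (var 2))),
    (cmerge (var 0) (plus (var 1) (var 2)),
      plus (cmerge (var 0) (var 1)) (cmerge (var 0) (var 2))) }

open Tm in
/-- The prefix axiom for left merge. -/
def L3eq (μ : Act A) : Eqn A :=
  (lmerge (pre μ (var 0)) (var 1), pre μ (par (var 0) (var 1)))

open scoped Classical in
open Tm in
/-- The prefix axioms for communication merge. -/
noncomputable def C5eq (μ ν : Act A) : Eqn A :=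
  (cmerge (pre μ (var 0)) (pre ν (var 1)),
    if μ ≠ Act.tau ∧ ν = μ.co then pre Act.tau (par (var 0) (var 1)) else nil)

/-- The full axiom system. -/
noncomputable def axE (A : Type) : Set (Eqn A) :=
  baseE A ∪ Set.range L3eq ∪ Set.range (fun p : Act A × Act A => C5eq p.1 p.2)

theorem axE_finite [Finite A] : (axE A).Finite := by
  refine Set.Finite.union (Set.Finite.union ?_ (Set.finite_range _)) (Set.finite_range _)
  unfold baseE
  repeat' apply Set.Finite.insert
  exact Set.finite_singleton _


/-! ### Soundness -/

/-- An equation all whose instances have literally the same transitions is sound. -/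
theorem sound_of_stepIff {t u : Tm A}
    (h : ∀ σ : ℕ → Tm A, ∀ μ p', Step (subst σ t) μ p' ↔ Step (subst σ u) μ p') :
    EqnSound Bisim t u := by
  intro σ _
  refine ⟨fun p q => p = q ∨ (p = subst σ t ∧ q = subst σ u) ∨ (p = subst σ u ∧ q = subst σ t),
    ⟨by tauto, ?_⟩, Or.inr (Or.inl ⟨rfl, rfl⟩)⟩
  rintro p q μ p' (rfl | ⟨rfl, rfl⟩ | ⟨rfl, rfl⟩) hs
  · exact ⟨p', hs, Or.inl rfl⟩
  · exact ⟨p', (h σ μ p').mp hs, Or.inl rfl⟩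
  · exact ⟨p', (h σ μ p').mpr hs, Or.inl rfl⟩

/-- Soundness of the expansion axiom (needs a genuine bisimulation). -/
theorem sound_expansion (a b : Tm A) :
    Bisim (Tm.par a b)
      (Tm.plus (Tm.plus (Tm.lmerge a b) (Tm.lmerge b a)) (Tm.cmerge a b)) := by
  classical
  let PC : Tm A → Tm A → Prop := fun p q => ∃ a b, p = Tm.par a b ∧ q = Tm.par b a
  let EP : Tm A → Tm A → Prop := fun p q => ∃ a b, p = Tm.par a b ∧
      q = Tm.plus (Tm.plus (Tm.lmerge a b) (Tm.lmerge b a)) (Tm.cmerge a b)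
  refine ⟨fun p q => p = q ∨ PC p q ∨ PC q p ∨ EP p q ∨ EP q p, ⟨?_, ?_⟩,
    Or.inr (Or.inr (Or.inr (Or.inl ⟨a, b, rfl, rfl⟩)))⟩
  · rintro p q (rfl | h | h | h | h)
    · exact Or.inl rfl
    · exact Or.inr (Or.inr (Or.inl h))
    · exact Or.inr (Or.inl h)
    · exact Or.inr (Or.inr (Or.inr (Or.inr h)))
    · exact Or.inr (Or.inr (Or.inr (Or.inl h)))
  rintro p q μ p' (rfl | ⟨a, b, rfl, rfl⟩ | ⟨a, b, rfl, rfl⟩ | ⟨a, b, rfl, rfl⟩ | ⟨a, b, rfl, rfl⟩) hs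
  · exact ⟨p', hs, Or.inl rfl⟩
  · cases hs with
    | parL h => exact ⟨_, Step.parR h, Or.inr (Or.inl ⟨_, _, rfl, rfl⟩)⟩
    | parR h => exact ⟨_, Step.parL h, Or.inr (Or.inl ⟨_, _, rfl, rfl⟩)⟩
    | comm hτ h1 h2 =>
        exact ⟨_, Step.comm (co_ne_tau hτ) h2 (by rwa [co_co]),
          Or.inr (Or.inl ⟨_, _, rfl, rfl⟩)⟩
  · cases hs with
    | parL h => exact ⟨_, Step.parR h, Or.inr (Or.inl ⟨_, _, rfl, rfl⟩)⟩
    | parR h => exact ⟨_, Step.parL h, Or.inr (Or.inl ⟨_, _, rfl, rfl⟩)⟩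
    | comm hτ h1 h2 =>
        exact ⟨_, Step.comm (co_ne_tau hτ) h2 (by rwa [co_co]),
          Or.inr (Or.inl ⟨_, _, rfl, rfl⟩)⟩
  · -- p = par a b, q = expansion
    cases hs with
    | parL h => exact ⟨_, Step.plusL (Step.plusL (Step.lmerge h)), Or.inl rfl⟩
    | parR h => exact ⟨_, Step.plusL (Step.plusR (Step.lmerge h)),
        Or.inr (Or.inl ⟨_, _, rfl, rfl⟩)⟩
    | comm hτ h1 h2 => exact ⟨_, Step.plusR (Step.cmerge hτ h1 h2), Or.inl rfl⟩
  · -- p = expansion, q = par a b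
    cases hs with
    | plusL h =>
        cases h with
        | plusL h =>
            cases h with
            | lmerge h => exact ⟨_, Step.parL h, Or.inl rfl⟩
        | plusR h =>
            cases h with
            | lmerge h => exact ⟨_, Step.parR h, Or.inr (Or.inl ⟨_, _, rfl, rfl⟩)⟩
    | plusR h =>
        cases h with
        | cmerge hτ h1 h2 => exact ⟨_, Step.comm hτ h1 h2, Or.inl rfl⟩

theorem axE_sound : SystemSound (Bisim (A := A)) (axE A) := by
  classical
  rintro ⟨l, r⟩ he
  rcases he with (he | ⟨μ, he⟩) | ⟨⟨μ, ν⟩, he⟩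
  · -- base axioms
    simp only [baseE, Set.mem_insert_iff, Set.mem_singleton_iff, Prod.mk.injEq] at he
    rcases he with ⟨rfl, rfl⟩ | ⟨rfl, rfl⟩ | ⟨rfl, rfl⟩ | ⟨rfl, rfl⟩ | ⟨rfl, rfl⟩ |
      ⟨rfl, rfl⟩ | ⟨rfl, rfl⟩ | ⟨rfl, rfl⟩ | ⟨rfl, rfl⟩ | ⟨rfl, rfl⟩ | ⟨rfl, rfl⟩
    -- A1
    · refine sound_of_stepIff fun σ μ p' => ?_
      dsimp only [subst]
      constructor <;> intro h <;> cases h with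
      | plusL h => exact Step.plusR h
      | plusR h => exact Step.plusL h
    -- A2
    · refine sound_of_stepIff fun σ μ p' => ?_
      dsimp only [subst]
      constructor <;> intro h
      · cases h with
        | plusL h =>
            cases h with
            | plusL h => exact Step.plusL h
            | plusR h => exact Step.plusR (Step.plusL h)
        | plusR h => exact Step.plusR (Step.plusR h)
      · cases h with
        | plusL h => exact Step.plusL (Step.plusL h)
        | plusR h =>
            cases h with
            | plusL h => exact Step.plusL (Step.plusR h)
            | plusR h => exact Step.plusR h
    -- A3
    · refine sound_of_stepIff fun σ μ p' => ?_
      dsimp only [subst]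
      constructor <;> intro h
      · cases h with
        | plusL h => exact h
        | plusR h => exact h
      · exact Step.plusL h
    -- A4
    · refine sound_of_stepIff fun σ μ p' => ?_
      dsimp only [subst]
      constructor <;> intro h
      · cases h with
        | plusL h => exact h
        | plusR h => cases h
      · exact Step.plusL h
    -- expansion
    · intro σ _
      dsimp only [subst]
      exact sound_expansion _ _
    -- L1
    · refine sound_of_stepIff fun σ μ p' => ?_
      dsimp only [subst]
      constructor <;> intro h
      · cases h with
        | lmerge h => cases h
      · cases h
    -- L2
    · refine sound_of_stepIff fun σ μ p' => ?_
      dsimp only [subst]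
      constructor <;> intro h
      · cases h with
        | lmerge h =>
            cases h with
            | plusL h => exact Step.plusL (Step.lmerge h)
            | plusR h => exact Step.plusR (Step.lmerge h)
      · cases h with
        | plusL h =>
            cases h with
            | lmerge h => exact Step.lmerge (Step.plusL h)
        | plusR h =>
            cases h with
            | lmerge h => exact Step.lmerge (Step.plusR h)
    -- C1
    · refine sound_of_stepIff fun σ μ p' => ?_
      dsimp only [subst]
      constructor <;> intro h
      · cases h with
        | cmerge hτ h1 h2 => cases h1
      · cases h
    -- C2
    · refine sound_of_stepIff fun σ μ p' => ?_
      dsimp only [subst]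
      constructor <;> intro h
      · cases h with
        | cmerge hτ h1 h2 => cases h2
      · cases h
    -- C3
    · refine sound_of_stepIff fun σ μ p' => ?_
      dsimp only [subst]
      constructor <;> intro h
      · cases h with
        | cmerge hτ h1 h2 =>
            cases h1 with
            | plusL h1 => exact Step.plusL (Step.cmerge hτ h1 h2)
            | plusR h1 => exact Step.plusR (Step.cmerge hτ h1 h2)
      · cases h with
        | plusL h =>
            cases h with
            | cmerge hτ h1 h2 => exact Step.cmerge hτ (Step.plusL h1) h2
        | plusR h =>
            cases h with
            | cmerge hτ h1 h2 => exact Step.cmerge hτ (Step.plusR h1) h2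
    -- C4
    · refine sound_of_stepIff fun σ μ p' => ?_
      dsimp only [subst]
      constructor <;> intro h
      · cases h with
        | cmerge hτ h1 h2 =>
            cases h2 with
            | plusL h2 => exact Step.plusL (Step.cmerge hτ h1 h2)
            | plusR h2 => exact Step.plusR (Step.cmerge hτ h1 h2)
      · cases h with
        | plusL h =>
            cases h with
            | cmerge hτ h1 h2 => exact Step.cmerge hτ h1 (Step.plusL h2)
        | plusR h =>
            cases h with
            | cmerge hτ h1 h2 => exact Step.cmerge hτ h1 (Step.plusR h2)
  · -- L3
    cases he
    refine sound_of_stepIff fun σ ν p' => ?_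
    dsimp only [L3eq, subst]
    constructor <;> intro h
    · cases h with
      | lmerge h => cases h; exact Step.pre _ _
    · cases h
      exact Step.lmerge (Step.pre _ _)
  · -- C5
    cases he
    by_cases hc : μ ≠ Act.tau ∧ ν = μ.co
    · obtain ⟨hτ, rfl⟩ := hc
      refine sound_of_stepIff fun σ κ p' => ?_
      dsimp only [C5eq]
      rw [if_pos ⟨hτ, rfl⟩]
      dsimp only [subst]
      constructor <;> intro h
      · cases h with
        | cmerge hτ' h1 h2 => cases h1; cases h2; exact Step.pre _ _
      · cases h
        exact Step.cmerge hτ (Step.pre _ _) (Step.pre _ _)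
    · refine sound_of_stepIff fun σ κ p' => ?_
      dsimp only [C5eq]
      rw [if_neg hc]
      dsimp only [subst]
      constructor <;> intro h
      · cases h with
        | cmerge hτ' h1 h2 => cases h1; cases h2; exact absurd ⟨hτ', rfl⟩ hc
      · cases h


/-! ### Depth and closedness -/

def depth : Tm A → ℕ
  | .nil => 0
  | .var _ => 0
  | .pre _ t => depth t + 1
  | .plus t u => max (depth t) (depth u)
  | .par t u => depth t + depth u
  | .lmerge t u => depth t + depth u
  | .cmerge t u => depth t + depth u

theorem step_depth {p p' : Tm A} {μ : Act A} (h : Step p μ p') : depth p' < depth p := by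
  induction h with
  | pre => simp [depth]
  | plusL _ ih => simp only [depth]; omega
  | plusR _ ih => simp only [depth]; omega
  | parL _ ih => simp only [depth]; omega
  | parR _ ih => simp only [depth]; omega
  | comm _ _ _ ih1 ih2 => simp only [depth]; omega
  | lmerge _ ih => simp only [depth]; omega
  | cmerge _ _ _ ih1 ih2 => simp only [depth]; omega

theorem step_closed {p p' : Tm A} {μ : Act A} (h : Step p μ p') (hp : Closed p) :
    Closed p' := by
  induction h <;> simp_all [Closed]

/-! ### Sums of prefixed terms -/

def sumOf : List (Act A × Tm A) → Tm A
  | [] => .nil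
  | (μ, t) :: l => .plus (.pre μ t) (sumOf l)

/-- Abbreviation for derivability from the axiom system. -/
abbrev Drv {A : Type} : Tm A → Tm A → Prop := Deriv (axE A)

def σ3 (a b c : Tm A) : ℕ → Tm A
  | 0 => a
  | 1 => b
  | 2 => c
  | _ => Tm.nil

open Tm in
theorem dcomm (a b : Tm A) : Drv (plus a b) (plus b a) := by
  have h : ((plus (var 0) (var 1) : Tm A), plus (var 1) (var 0)) ∈ axE A :=
    Set.mem_union_left _ (Set.mem_union_left _ (by simp [baseE]))
  have := Deriv.ax (σ3 a b nil) h
  simpa only [subst, σ3] using this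

open Tm in
theorem dassoc (a b c : Tm A) : Drv (plus (plus a b) c) (plus a (plus b c)) := by
  have h : ((plus (plus (var 0) (var 1)) (var 2) : Tm A),
      plus (var 0) (plus (var 1) (var 2))) ∈ axE A :=
    Set.mem_union_left _ (Set.mem_union_left _ (by simp [baseE]))
  have := Deriv.ax (σ3 a b c) h
  simpa only [subst, σ3] using this

open Tm in
theorem didem (a : Tm A) : Drv (plus a a) a := by
  have h : ((plus (var 0) (var 0) : Tm A), var 0) ∈ axE A :=
    Set.mem_union_left _ (Set.mem_union_left _ (by simp [baseE]))
  have := Deriv.ax (σ3 a nil nil) h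
  simpa only [subst, σ3] using this

open Tm in
theorem dnilR (a : Tm A) : Drv (plus a nil) a := by
  have h : ((plus (var 0) nil : Tm A), var 0) ∈ axE A :=
    Set.mem_union_left _ (Set.mem_union_left _ (by simp [baseE]))
  have := Deriv.ax (σ3 a nil nil) h
  simpa only [subst, σ3] using this

open Tm in
theorem dnilL (a : Tm A) : Drv (plus nil a) a := (dcomm nil a).trans (dnilR a)

open Tm in
theorem dexp (a b : Tm A) : Drv (par a b)
    (plus (plus (lmerge a b) (lmerge b a)) (cmerge a b)) := by
  have h : ((par (var 0) (var 1) : Tm A),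
      plus (plus (lmerge (var 0) (var 1)) (lmerge (var 1) (var 0)))
        (cmerge (var 0) (var 1))) ∈ axE A :=
    Set.mem_union_left _ (Set.mem_union_left _ (by simp [baseE]))
  have := Deriv.ax (σ3 a b nil) h
  simpa only [subst, σ3] using this

open Tm in
theorem dlnil (a : Tm A) : Drv (lmerge nil a) nil := by
  have h : ((lmerge nil (var 0) : Tm A), nil) ∈ axE A :=
    Set.mem_union_left _ (Set.mem_union_left _ (by simp [baseE]))
  have := Deriv.ax (σ3 a nil nil) h
  simpa only [subst, σ3] using this

open Tm in
theorem dldist (a b c : Tm A) :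
    Drv (lmerge (plus a b) c) (plus (lmerge a c) (lmerge b c)) := by
  have h : ((lmerge (plus (var 0) (var 1)) (var 2) : Tm A),
      plus (lmerge (var 0) (var 2)) (lmerge (var 1) (var 2))) ∈ axE A :=
    Set.mem_union_left _ (Set.mem_union_left _ (by simp [baseE]))
  have := Deriv.ax (σ3 a b c) h
  simpa only [subst, σ3] using this

open Tm in
theorem dlpre (μ : Act A) (a b : Tm A) :
    Drv (lmerge (pre μ a) b) (pre μ (par a b)) := by
  have h : L3eq μ ∈ axE A :=
    Set.mem_union_left _ (Set.mem_union_right _ (Set.mem_range_self μ))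
  have := Deriv.ax (σ3 a b nil) h
  simpa only [L3eq, subst, σ3] using this

open Tm in
theorem dcnilL (a : Tm A) : Drv (cmerge nil a) nil := by
  have h : ((cmerge nil (var 0) : Tm A), nil) ∈ axE A :=
    Set.mem_union_left _ (Set.mem_union_left _ (by simp [baseE]))
  have := Deriv.ax (σ3 a nil nil) h
  simpa only [subst, σ3] using this

open Tm in
theorem dcnilR (a : Tm A) : Drv (cmerge a nil) nil := by
  have h : ((cmerge (var 0) nil : Tm A), nil) ∈ axE A :=
    Set.mem_union_left _ (Set.mem_union_left _ (by simp [baseE]))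
  have := Deriv.ax (σ3 a nil nil) h
  simpa only [subst, σ3] using this

open Tm in
theorem dcdistL (a b c : Tm A) :
    Drv (cmerge (plus a b) c) (plus (cmerge a c) (cmerge b c)) := by
  have h : ((cmerge (plus (var 0) (var 1)) (var 2) : Tm A),
      plus (cmerge (var 0) (var 2)) (cmerge (var 1) (var 2))) ∈ axE A :=
    Set.mem_union_left _ (Set.mem_union_left _ (by simp [baseE]))
  have := Deriv.ax (σ3 a b c) h
  simpa only [subst, σ3] using this

open Tm in
theorem dcdistR (a b c : Tm A) :
    Drv (cmerge a (plus b c)) (plus (cmerge a b) (cmerge a c)) := by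
  have h : ((cmerge (var 0) (plus (var 1) (var 2)) : Tm A),
      plus (cmerge (var 0) (var 1)) (cmerge (var 0) (var 2))) ∈ axE A :=
    Set.mem_union_left _ (Set.mem_union_left _ (by simp [baseE]))
  have := Deriv.ax (σ3 a b c) h
  simpa only [subst, σ3] using this

open scoped Classical in
open Tm in
theorem dcpre (μ ν : Act A) (a b : Tm A) :
    Drv (cmerge (pre μ a) (pre ν b))
      (if μ ≠ Act.tau ∧ ν = μ.co then pre Act.tau (par a b) else nil) := by
  have h : C5eq μ ν ∈ axE A :=
    Set.mem_union_right _ (Set.mem_range.mpr ⟨(μ, ν), rfl⟩)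
  have := Deriv.ax (σ3 a b nil) h
  unfold C5eq at this
  split at this <;> split <;> first
    | (simpa only [subst, σ3] using this)
    | simp_all

theorem dsum_append (l m : List (Act A × Tm A)) :
    Drv (Tm.plus (sumOf l) (sumOf m)) (sumOf (l ++ m)) := by
  induction l with
  | nil => exact dnilL _
  | cons e l IH =>
      obtain ⟨μ, t⟩ := e
      exact (dassoc _ _ _).trans (Deriv.plus (Deriv.refl _) IH)

theorem absorb_mem {μ : Act A} {t : Tm A} {m : List (Act A × Tm A)} (h : (μ, t) ∈ m) :
    Drv (Tm.plus (sumOf m) (Tm.pre μ t)) (sumOf m) := by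
  induction m with
  | nil => cases h
  | cons e m IH =>
      obtain ⟨ν, u⟩ := e
      cases h with
      | head =>
        refine ((dassoc _ _ _).trans ?_)
        refine (Deriv.plus (Deriv.refl _) (dcomm _ _)).trans ?_
        refine (Deriv.symm (dassoc _ _ _)).trans ?_
        exact Deriv.plus (didem _) (Deriv.refl _)
      | tail _ hmem => exact (dassoc _ _ _).trans ((Deriv.plus (Deriv.refl _) (IH hmem)))

theorem absorb_list {s : Tm A} {l : List (Act A × Tm A)}
    (h : ∀ e ∈ l, Drv (Tm.plus s (Tm.pre e.1 e.2)) s) :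
    Drv (Tm.plus s (sumOf l)) s := by
  induction l with
  | nil => exact dnilR _
  | cons e l IH =>
      obtain ⟨μ, t⟩ := e
      refine (Deriv.symm (dassoc _ _ _)).trans ?_
      refine (Deriv.plus (h (μ, t) List.mem_cons_self) (Deriv.refl _)).trans ?_
      exact IH fun e he => h e (List.mem_cons_of_mem _ he)

/-! ### Communication lists -/

open scoped Classical in
noncomputable def comL1 (μ : Act A) (t : Tm A) : List (Act A × Tm A) → List (Act A × Tm A)
  | [] => []
  | (ν, u) :: m =>
      (if μ ≠ Act.tau ∧ ν = μ.co then [(Act.tau, Tm.par t u)] else []) ++ comL1 μ t m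

noncomputable def comL : List (Act A × Tm A) → List (Act A × Tm A) → List (Act A × Tm A)
  | [], _ => []
  | (μ, t) :: l, m => comL1 μ t m ++ comL l m

theorem comL1_mem {μ : Act A} {t : Tm A} {m : List (Act A × Tm A)} {κ : Act A} {v : Tm A} :
    (κ, v) ∈ comL1 μ t m ↔
      ∃ u, (μ.co, u) ∈ m ∧ μ ≠ Act.tau ∧ κ = Act.tau ∧ v = Tm.par t u := by
  classical
  induction m with
  | nil => simp [comL1]
  | cons e m IH =>
      obtain ⟨ν, u⟩ := e
      simp only [comL1, List.mem_append, IH, List.mem_cons]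
      constructor
      · rintro (h | ⟨u', hu', hτ, rfl, rfl⟩)
        · split at h
          · rename_i hc
            obtain ⟨hτ, rfl⟩ := hc
            simp only [List.mem_singleton, Prod.mk.injEq] at h
            obtain ⟨rfl, rfl⟩ := h
            exact ⟨u, Or.inl rfl, hτ, rfl, rfl⟩
          · simp at h
        · exact ⟨u', Or.inr hu', hτ, rfl, rfl⟩
      · rintro ⟨u', hu', hτ, rfl, rfl⟩
        rcases hu' with heq | hmem
        · rw [Prod.mk.injEq] at heq
          obtain ⟨h1, h2⟩ := heq
          subst h1; subst h2
          exact Or.inl (by rw [if_pos ⟨hτ, rfl⟩]; exact List.mem_singleton.mpr rfl)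
        · exact Or.inr ⟨u', hmem, hτ, rfl, rfl⟩

theorem comL_mem {l m : List (Act A × Tm A)} {κ : Act A} {v : Tm A} :
    (κ, v) ∈ comL l m ↔
      ∃ α s u, (α, s) ∈ l ∧ (α.co, u) ∈ m ∧ α ≠ Act.tau ∧ κ = Act.tau ∧ v = Tm.par s u := by
  induction l with
  | nil => simp [comL]
  | cons e l IH =>
      obtain ⟨μ, t⟩ := e
      simp only [comL, List.mem_append, comL1_mem, IH, List.mem_cons]
      constructor
      · rintro (⟨u, hu, hτ, rfl, rfl⟩ | ⟨α, s, u, hs, hu, hτ, rfl, rfl⟩)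
        · exact ⟨μ, t, u, Or.inl rfl, hu, hτ, rfl, rfl⟩
        · exact ⟨α, s, u, Or.inr hs, hu, hτ, rfl, rfl⟩
      · rintro ⟨α, s, u, hs, hu, hτ, rfl, rfl⟩
        rcases hs with heq | hmem
        · rw [Prod.mk.injEq] at heq
          obtain ⟨h1, h2⟩ := heq
          subst h1; subst h2
          exact Or.inl ⟨u, hu, hτ, rfl, rfl⟩
        · exact Or.inr ⟨α, s, u, hmem, hu, hτ, rfl, rfl⟩

theorem dcomL1 (μ : Act A) (t : Tm A) (m : List (Act A × Tm A)) :
    Drv (Tm.cmerge (Tm.pre μ t) (sumOf m)) (sumOf (comL1 μ t m)) := by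
  classical
  induction m with
  | nil => exact dcnilR _
  | cons e m IH =>
      obtain ⟨ν, u⟩ := e
      refine (dcdistR _ _ _).trans ?_
      refine (Deriv.plus (dcpre μ ν t u) IH).trans ?_
      by_cases hc : μ ≠ Act.tau ∧ ν = μ.co
      · rw [if_pos hc]
        show Drv _ (sumOf ((if μ ≠ Act.tau ∧ ν = μ.co then
          [(Act.tau, Tm.par t u)] else []) ++ comL1 μ t m))
        rw [if_pos hc]
        exact Deriv.refl _
      · rw [if_neg hc]
        show Drv _ (sumOf ((if μ ≠ Act.tau ∧ ν = μ.co then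
          [(Act.tau, Tm.par t u)] else []) ++ comL1 μ t m))
        rw [if_neg hc]
        exact dnilL _

theorem dcomL (l m : List (Act A × Tm A)) :
    Drv (Tm.cmerge (sumOf l) (sumOf m)) (sumOf (comL l m)) := by
  induction l with
  | nil => exact dcnilL _
  | cons e l IH =>
      obtain ⟨μ, t⟩ := e
      refine (dcdistL _ _ _).trans ?_
      refine (Deriv.plus (dcomL1 μ t m) IH).trans ?_
      exact dsum_append _ _

theorem dlmerge_sum (l : List (Act A × Tm A)) (u : Tm A) :
    Drv (Tm.lmerge (sumOf l) u) (sumOf (l.map fun e => (e.1, Tm.par e.2 u))) := by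
  induction l with
  | nil => exact dlnil _
  | cons e l IH =>
      obtain ⟨μ, t⟩ := e
      refine (dldist _ _ _).trans ?_
      exact Deriv.plus (dlpre μ t u) IH


/-! ### Head normal forms -/

theorem hnf (p : Tm A) (hp : Closed p) :
    ∃ l : List (Act A × Tm A),
      Drv p (sumOf l) ∧
      (∀ μ s, (μ, s) ∈ l → Closed s ∧ depth s < depth p ∧ ∃ p', Step p μ p' ∧ Bisim s p') ∧
      (∀ μ p', Step p μ p' → ∃ s, (μ, s) ∈ l ∧ Bisim s p') := by
  induction p with
  | nil =>
      refine ⟨[], Deriv.refl _, ?_, ?_⟩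
      · intro μ s h; cases h
      · intro μ p' h; cases h
  | var x => cases hp
  | pre μ t _ =>
      refine ⟨[(μ, t)], Deriv.symm (dnilR _), ?_, ?_⟩
      · intro ν s h
        rcases List.mem_singleton.mp h with h
        rw [Prod.mk.injEq] at h
        obtain ⟨rfl, rfl⟩ := h
        exact ⟨hp, by simp [depth], _, Step.pre _ _, bisim_refl _⟩
      · intro ν p' h
        cases h
        exact ⟨t, List.mem_singleton.mpr rfl, bisim_refl t⟩
  | plus t u IHt IHu =>
      obtain ⟨lt, dt, t2, t3⟩ := IHt hp.1
      obtain ⟨lu, du, u2, u3⟩ := IHu hp.2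
      refine ⟨lt ++ lu, (Deriv.plus dt du).trans (dsum_append _ _), ?_, ?_⟩
      · intro μ s h
        rcases List.mem_append.mp h with h | h
        · obtain ⟨hc, hd, p', hs, hb⟩ := t2 μ s h
          exact ⟨hc, lt_of_lt_of_le hd (by simp only [depth]; omega),
            p', Step.plusL hs, hb⟩
        · obtain ⟨hc, hd, p', hs, hb⟩ := u2 μ s h
          exact ⟨hc, lt_of_lt_of_le hd (by simp only [depth]; omega),
            p', Step.plusR hs, hb⟩
      · intro μ p' h
        cases h with
        | plusL h =>
            obtain ⟨s, hmem, hb⟩ := t3 _ _ h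
            exact ⟨s, List.mem_append_left _ hmem, hb⟩
        | plusR h =>
            obtain ⟨s, hmem, hb⟩ := u3 _ _ h
            exact ⟨s, List.mem_append_right _ hmem, hb⟩
  | lmerge t u IHt _ =>
      obtain ⟨lt, dt, t2, t3⟩ := IHt hp.1
      refine ⟨lt.map fun e => (e.1, Tm.par e.2 u),
        (Deriv.lmerge dt (Deriv.refl u)).trans (dlmerge_sum _ _), ?_, ?_⟩
      · intro μ s h
        obtain ⟨⟨ν, w⟩, hmem, heq⟩ := List.mem_map.mp h
        rw [Prod.mk.injEq] at heq
        obtain ⟨rfl, rfl⟩ := heq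
        obtain ⟨hc, hd, t', hs, hb⟩ := t2 _ _ hmem
        refine ⟨⟨hc, hp.2⟩, ?_, Tm.par t' u, Step.lmerge hs,
          bisim_par_congr hb (bisim_refl u)⟩
        simp only [depth]; omega
      · intro μ p' h
        cases h with
        | lmerge h =>
            obtain ⟨s, hmem, hb⟩ := t3 _ _ h
            exact ⟨Tm.par s u, List.mem_map.mpr ⟨(μ, s), hmem, rfl⟩,
              bisim_par_congr hb (bisim_refl u)⟩
  | cmerge t u IHt IHu =>
      obtain ⟨lt, dt, t2, t3⟩ := IHt hp.1
      obtain ⟨lu, du, u2, u3⟩ := IHu hp.2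
      refine ⟨comL lt lu, (Deriv.cmerge dt du).trans (dcomL _ _), ?_, ?_⟩
      · intro μ s h
        obtain ⟨α, s', u', hs', hu', hτ, rfl, rfl⟩ := comL_mem.mp h
        obtain ⟨hcs, hds, t', hst, hbt⟩ := t2 _ _ hs'
        obtain ⟨hcu, hdu, u'', hsu, hbu⟩ := u2 _ _ hu'
        refine ⟨⟨hcs, hcu⟩, by simp only [depth]; omega,
          Tm.par t' u'', Step.cmerge hτ hst hsu, bisim_par_congr hbt hbu⟩
      · intro μ p' h
        cases h with
        | cmerge hτ h1 h2 =>
            obtain ⟨s, hmem, hb⟩ := t3 _ _ h1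
            obtain ⟨w, hmem', hb'⟩ := u3 _ _ h2
            exact ⟨Tm.par s w, comL_mem.mpr ⟨_, s, w, hmem, hmem', hτ, rfl, rfl⟩,
              bisim_par_congr hb hb'⟩
  | par t u IHt IHu =>
      obtain ⟨lt, dt, t2, t3⟩ := IHt hp.1
      obtain ⟨lu, du, u2, u3⟩ := IHu hp.2
      refine ⟨((lt.map fun e => (e.1, Tm.par e.2 u)) ++
          (lu.map fun e => (e.1, Tm.par e.2 t))) ++ comL lt lu, ?_, ?_, ?_⟩
      · refine (dexp t u).trans ?_
        refine Deriv.trans (Deriv.plus (Deriv.plus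
          ((Deriv.lmerge dt (Deriv.refl u)).trans (dlmerge_sum _ _))
          ((Deriv.lmerge du (Deriv.refl t)).trans (dlmerge_sum _ _)))
          ((Deriv.cmerge dt du).trans (dcomL _ _))) ?_
        exact (Deriv.plus (dsum_append _ _) (Deriv.refl _)).trans (dsum_append _ _)
      · intro μ s h
        rcases List.mem_append.mp h with h | h
        · rcases List.mem_append.mp h with h | h
          · obtain ⟨⟨ν, w⟩, hmem, heq⟩ := List.mem_map.mp h
            rw [Prod.mk.injEq] at heq
            obtain ⟨rfl, rfl⟩ := heq
            obtain ⟨hc, hd, t', hs, hb⟩ := t2 _ _ hmem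
            refine ⟨⟨hc, hp.2⟩, by simp only [depth]; omega,
              Tm.par t' u, Step.parL hs, bisim_par_congr hb (bisim_refl u)⟩
          · obtain ⟨⟨ν, w⟩, hmem, heq⟩ := List.mem_map.mp h
            rw [Prod.mk.injEq] at heq
            obtain ⟨rfl, rfl⟩ := heq
            obtain ⟨hc, hd, u', hs, hb⟩ := u2 _ _ hmem
            refine ⟨⟨hc, hp.1⟩, by simp only [depth]; omega,
              Tm.par t u', Step.parR hs, ?_⟩
            exact bisim_trans (bisim_par_congr hb (bisim_refl t)) (bisim_par_comm u' t)
        · obtain ⟨α, s', u', hs', hu', hτ, rfl, rfl⟩ := comL_mem.mp h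
          obtain ⟨hcs, hds, t', hst, hbt⟩ := t2 _ _ hs'
          obtain ⟨hcu, hdu, u'', hsu, hbu⟩ := u2 _ _ hu'
          exact ⟨⟨hcs, hcu⟩, by simp only [depth]; omega,
            Tm.par t' u'', Step.comm hτ hst hsu, bisim_par_congr hbt hbu⟩
      · intro μ p' h
        cases h with
        | parL h =>
            obtain ⟨s, hmem, hb⟩ := t3 _ _ h
            exact ⟨Tm.par s u,
              List.mem_append_left _ (List.mem_append_left _
                (List.mem_map.mpr ⟨(μ, s), hmem, rfl⟩)),
              bisim_par_congr hb (bisim_refl u)⟩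
        | parR h =>
            obtain ⟨s, hmem, hb⟩ := u3 _ _ h
            refine ⟨Tm.par s t,
              List.mem_append_left _ (List.mem_append_right _
                (List.mem_map.mpr ⟨(μ, s), hmem, rfl⟩)), ?_⟩
            exact bisim_trans (bisim_par_congr hb (bisim_refl t)) (bisim_par_comm _ t)
        | comm hτ h1 h2 =>
            obtain ⟨s, hmem, hb⟩ := t3 _ _ h1
            obtain ⟨w, hmem', hb'⟩ := u3 _ _ h2
            exact ⟨Tm.par s w,
              List.mem_append_right _ (comL_mem.mpr ⟨_, s, w, hmem, hmem', hτ, rfl, rfl⟩),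
              bisim_par_congr hb hb'⟩


/-! ### Ground-completeness -/

theorem axE_complete_aux :
    ∀ (n : ℕ) (p q : Tm A), depth p < n → Closed p → Closed q → Bisim p q → Drv p q := by
  intro n
  induction n with
  | zero => exact fun p q h => absurd h (Nat.not_lt_zero _)
  | succ n IH =>
      intro p q hd hp hq hpq
      obtain ⟨l, dl, l2, l3⟩ := hnf p hp
      obtain ⟨m, dm, m2, m3⟩ := hnf q hq
      have habsL : ∀ e ∈ l, Drv (Tm.plus (sumOf m) (Tm.pre e.1 e.2)) (sumOf m) := by
        rintro ⟨μ, s⟩ hmem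
        obtain ⟨hcs, hds, p', hstep, hbis⟩ := l2 μ s hmem
        obtain ⟨q', hqstep, hbis'⟩ := bisim_step hpq hstep
        obtain ⟨s', hs'm, hbis''⟩ := m3 μ q' hqstep
        obtain ⟨hcs', _, _⟩ := m2 μ s' hs'm
        have hb : Bisim s s' :=
          bisim_trans hbis (bisim_trans hbis' (bisim_symm hbis''))
        have hder : Drv s s' := IH s s' (by omega) hcs hcs' hb
        exact Deriv.trans (Deriv.plus (Deriv.refl _) (Deriv.pre μ hder)) (absorb_mem hs'm)
      have habsR : ∀ e ∈ m, Drv (Tm.plus (sumOf l) (Tm.pre e.1 e.2)) (sumOf l) := by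
        rintro ⟨ν, w⟩ hmem
        obtain ⟨hcw, hdw, q', hqstep, hbw⟩ := m2 ν w hmem
        obtain ⟨p', hpstep, hb'⟩ := bisim_step (bisim_symm hpq) hqstep
        obtain ⟨s, hsl, hbs⟩ := l3 ν p' hpstep
        obtain ⟨hcs, hds, _⟩ := l2 ν s hsl
        have hb : Bisim s w :=
          bisim_trans hbs (bisim_trans (bisim_symm hb') (bisim_symm hbw))
        have hder : Drv s w := IH s w (by omega) hcs hcw hb
        exact Deriv.trans
          (Deriv.plus (Deriv.refl _) (Deriv.pre ν (Deriv.symm hder))) (absorb_mem hsl)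
      have h1 : Drv (Tm.plus (sumOf m) (sumOf l)) (sumOf m) := absorb_list habsL
      have h2 : Drv (Tm.plus (sumOf l) (sumOf m)) (sumOf l) := absorb_list habsR
      have hlm : Drv (sumOf l) (sumOf m) :=
        (Deriv.symm h2).trans ((dcomm _ _).trans h1)
      exact dl.trans (hlm.trans (Deriv.symm dm))

theorem axE_complete : GroundComplete (Bisim (A := A)) (axE A) := fun p q hp hq h =>
  axE_complete_aux (depth p + 1) p q (Nat.lt_succ_self _) hp hq h

end Helpers






/-- **Bergstra–Klop theorem**: if the set `A` of action names is finite, then there is a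
finite axiom system over CCS extended with left merge and communication merge that is
sound and ground-complete modulo bisimilarity. -/
theorem stmt_4 (A : Type) [Finite A] :
    ∃ E : Set (Eqn A), E.Finite ∧ SystemSound Bisim E ∧ GroundComplete Bisim E :=
  ⟨axE A, axE_finite, axE_sound, axE_complete⟩
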